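/- arXiv:1306.5852 — 3 statements merged into one kernel-verified Lean document; each statement's English description precedes it below -/
import Mathlib

section
/- Let X be a compact topological space and let A ⊆ C(X, ℝ) be a bounded set of continuous functions. If A is relatively compact in the weak topology of the Banach space C(X,ℝ), then for any sequences f_n ∈ A and x_m ∈ X, the iterated limits lim_n lim_m f_n(x_m) and lim_m lim_n f_n(x_m) are equal whenever both exist. -/
open Filter

/-- In a Hausdorff space, a cluster point of a convergent sequence equals its limit. -/
lemma clusterPt_unique' {α : Type*} [TopologicalSpace α] [T2Space α] {u : ℕ → α} {a b : α}
    (h : Tendsto u atTop (nhds a)) (hb : MapClusterPt b atTop u) : b = a :=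
  eq_of_nhds_neBot (hb.clusterPt.mono h)

/-- If a bounded set `A ⊆ C(X,ℝ)` (X compact Hausdorff) is relatively compact in
the weak topology, then iterated double limits along sequences from `A` and `X`
agree whenever both exist. -/
theorem stmt_4 {X : Type*} [TopologicalSpace X] [CompactSpace X] [T2Space X]
    (A : Set C(X, ℝ)) (M : ℝ) (hM : ∀ f ∈ A, ‖f‖ ≤ M)
    (hcpt : IsCompact (@closure (WeakSpace ℝ C(X, ℝ)) _ (A : Set (WeakSpace ℝ C(X, ℝ)))))
    (f : ℕ → C(X, ℝ)) (hf : ∀ n, f n ∈ A) (x : ℕ → X)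
    (L K : ℕ → ℝ) (ℓ₁ ℓ₂ : ℝ)
    (hL : ∀ n, Tendsto (fun m => f n (x m)) atTop (nhds (L n)))
    (hℓ₁ : Tendsto L atTop (nhds ℓ₁))
    (hK : ∀ m, Tendsto (fun n => f n (x m)) atTop (nhds (K m)))
    (hℓ₂ : Tendsto K atTop (nhds ℓ₂)) :
    ℓ₁ = ℓ₂ := by
  -- a topological cluster point of the sequence `x` in the compact space `X`
  obtain ⟨x₀, hx₀⟩ := exists_clusterPt_of_compactSpace (map x atTop)
  have hx₀' : MapClusterPt x₀ atTop x := hx₀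
  -- a weak cluster point `g` of the sequence `f`
  have hsub : (A : Set (WeakSpace ℝ C(X, ℝ))) ⊆
      @closure (WeakSpace ℝ C(X, ℝ)) _ (A : Set (WeakSpace ℝ C(X, ℝ))) :=
    @subset_closure (WeakSpace ℝ C(X, ℝ)) _ (A : Set (WeakSpace ℝ C(X, ℝ)))
  have hle : map (fun n => (f n : WeakSpace ℝ C(X, ℝ))) atTop ≤
      Filter.principal (@closure (WeakSpace ℝ C(X, ℝ)) _ (A : Set (WeakSpace ℝ C(X, ℝ)))) := by
    refine le_principal_iff.2 (mem_map.2 ?_)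
    exact Filter.Eventually.of_forall fun n => hsub (hf n)
  haveI : NeBot (map (fun n => (f n : WeakSpace ℝ C(X, ℝ))) atTop) := Filter.map_neBot
  obtain ⟨g, -, hg⟩ := @IsCompact.exists_clusterPt _ _ _ hcpt _ this hle
  have hg' : MapClusterPt g atTop (fun n => (f n : WeakSpace ℝ C(X, ℝ))) := hg
  -- `g` regarded as a continuous map
  let g' : C(X, ℝ) := g
  -- evaluation at a point is weakly continuous
  have heval : ∀ y : X, Continuous fun h : WeakSpace ℝ C(X, ℝ) =>
      ContinuousMap.evalCLM (R := ℝ) y (show C(X, ℝ) from h) :=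
    fun y => WeakBilin.eval_continuous _ (ContinuousMap.evalCLM ℝ y)
  -- Step 1: `f n x₀ = L n` for each `n`
  have h1 : ∀ n, f n x₀ = L n := fun n =>
    clusterPt_unique' (hL n) (hx₀'.continuousAt_comp (f n).continuous.continuousAt)
  -- Step 2: `g x₀ = ℓ₁`
  have h2 : g' x₀ = ℓ₁ := by
    have hc : MapClusterPt (g' x₀) atTop (fun n => f n x₀) :=
      hg'.continuousAt_comp (heval x₀).continuousAt
    have hc' : MapClusterPt (g' x₀) atTop L := by
      have : (fun n => f n x₀) = L := funext h1
      rwa [this] at hc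
    exact clusterPt_unique' hℓ₁ hc'
  -- Step 3: `g (x m) = K m` for each `m`
  have h3 : ∀ m, g' (x m) = K m := fun m =>
    clusterPt_unique' (hK m) (hg'.continuousAt_comp (heval (x m)).continuousAt)
  -- Step 4: `g x₀ = ℓ₂` using continuity of `g`
  have h4 : g' x₀ = ℓ₂ := by
    have hc : MapClusterPt (g' x₀) atTop (fun m => g' (x m)) :=
      hx₀'.continuousAt_comp g'.continuous.continuousAt
    have hc' : MapClusterPt (g' x₀) atTop K := by
      have : (fun m => g' (x m)) = K := funext h3
      rwa [this] at hc
    exact clusterPt_unique' hℓ₂ hc'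
  rw [← h2, h4]
end

section
/- Conversely, if a bounded function φ : M × M → ℝ is unstable — i.e., there exist sequences a_n, b_m such that both iterated limits exist and lim_n lim_m φ(a_n,b_m) ≠ lim_m lim_n φ(a_n,b_m) — then there exist r < s real numbers and subsequences a_{n_k}, b_{m_l} such that φ(a_{n_k}, b_{m_l}) ≤ r whenever k > l and φ(a_{n_k}, b_{m_l}) ≥ s whenever k ≤ l (or with the inequalities reversed): φ has the order property with gap (r,s). -/
open Filter

lemma stmt_13_aux {M : Type*} (φ : M → M → ℝ)
    (a b : ℕ → M) (L K : ℕ → ℝ) (ℓ₁ ℓ₂ : ℝ)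
    (hL : ∀ n, Tendsto (fun m => φ (a n) (b m)) atTop (nhds (L n)))
    (hℓ₁ : Tendsto L atTop (nhds ℓ₁))
    (hK : ∀ m, Tendsto (fun n => φ (a n) (b m)) atTop (nhds (K m)))
    (hℓ₂ : Tendsto K atTop (nhds ℓ₂))
    (hlt : ℓ₂ < ℓ₁) :
    ∃ (r s : ℝ), r < s ∧ ∃ (nk ml : ℕ → ℕ), StrictMono nk ∧ StrictMono ml ∧
      (∀ k l, l < k → φ (a (nk k)) (b (ml l)) ≤ r) ∧
      (∀ k l, k ≤ l → s ≤ φ (a (nk k)) (b (ml l))) := by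
  set d : ℝ := (ℓ₁ - ℓ₂) / 3 with hd
  have hd0 : 0 < d := by simp [hd]; linarith
  set r : ℝ := ℓ₂ + d with hr
  set s : ℝ := ℓ₁ - d with hs
  have hrs : r < s := by simp [hr, hs, hd]; linarith
  have hsl : s < ℓ₁ := by simp [hs]; linarith
  have hrl : ℓ₂ < r := by simp [hr]; linarith
  obtain ⟨N, hN⟩ : ∃ N, ∀ n ≥ N, s < L n :=
    eventually_atTop.mp (hℓ₁.eventually (eventually_gt_nhds hsl))
  obtain ⟨Mth, hM⟩ : ∃ Mth, ∀ m ≥ Mth, K m < r :=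
    eventually_atTop.mp (hℓ₂.eventually (eventually_lt_nhds hrl))
  have ht1 : ∀ n, ∃ t, N ≤ n → ∀ m ≥ t, s < φ (a n) (b m) := by
    intro n
    by_cases h : N ≤ n
    · obtain ⟨t, ht⟩ := eventually_atTop.mp
        ((hL n).eventually (eventually_gt_nhds (hN n h)))
      exact ⟨t, fun _ => ht⟩
    · exact ⟨0, fun h' => absurd h' h⟩
  choose t1 ht1 using ht1
  have ht2 : ∀ m, ∃ t, Mth ≤ m → ∀ n ≥ t, φ (a n) (b m) < r := by
    intro m
    by_cases h : Mth ≤ m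
    · obtain ⟨t, ht⟩ := eventually_atTop.mp
        ((hK m).eventually (eventually_lt_nhds (hM m h)))
      exact ⟨t, fun _ => ht⟩
    · exact ⟨0, fun h' => absurd h' h⟩
  choose t2 ht2 using ht2
  set g1 : ℕ → ℕ := fun n => (Finset.range (n + 1)).sup t1 with hg1
  set g2 : ℕ → ℕ := fun m => (Finset.range (m + 1)).sup t2 with hg2
  have hg1mono : Monotone g1 := fun x y h =>
    Finset.sup_mono (Finset.range_subset_range.2 (by omega))
  have hg2mono : Monotone g2 := fun x y h =>
    Finset.sup_mono (Finset.range_subset_range.2 (by omega))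
  have hg1le : ∀ n, t1 n ≤ g1 n := fun n =>
    Finset.le_sup (Finset.mem_range.2 (Nat.lt_succ_self n))
  have hg2le : ∀ m, t2 m ≤ g2 m := fun m =>
    Finset.le_sup (Finset.mem_range.2 (Nat.lt_succ_self m))
  -- recursive construction
  let p : ℕ → ℕ × ℕ := fun k => Nat.rec (N, max Mth (g1 N))
    (fun _ q => (max (q.1 + 1) (g2 q.2), max (max (q.2 + 1) (g1 (max (q.1 + 1) (g2 q.2)))) 0)) k
  set nk : ℕ → ℕ := fun k => (p k).1 with hnk
  set ml : ℕ → ℕ := fun k => (p k).2 with hml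
  have hp0 : p 0 = (N, max Mth (g1 N)) := rfl
  have hpsucc : ∀ k, p (k + 1) =
      (max ((p k).1 + 1) (g2 (p k).2),
       max (max ((p k).2 + 1) (g1 (max ((p k).1 + 1) (g2 (p k).2)))) 0) := fun k => rfl
  have hnsucc : ∀ k, nk (k + 1) = max (nk k + 1) (g2 (ml k)) := fun k => rfl
  have hmsucc : ∀ k, ml (k + 1) = max (max (ml k + 1) (g1 (nk (k + 1)))) 0 := fun k => rfl
  have hnmono : StrictMono nk := strictMono_nat_of_lt_succ (fun k => by
    rw [hnsucc k]; omega)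
  have hmmono : StrictMono ml := strictMono_nat_of_lt_succ (fun k => by
    rw [hmsucc k]; omega)
  have hnN : ∀ k, N ≤ nk k := by
    intro k
    induction k with
    | zero => exact le_refl N
    | succ k ih => rw [hnsucc k]; omega
  have hmM : ∀ k, Mth ≤ ml k := by
    intro k
    induction k with
    | zero => exact le_max_left _ _
    | succ k ih => rw [hmsucc k]; omega
  have hg1m : ∀ k, g1 (nk k) ≤ ml k := by
    intro k
    cases k with
    | zero => exact le_max_right _ _
    | succ k => rw [hmsucc k]; omega
  have hg2n : ∀ k, g2 (ml k) ≤ nk (k + 1) := fun k => by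
    rw [hnsucc k]; omega
  refine ⟨r, s, hrs, nk, ml, hnmono, hmmono, ?_, ?_⟩
  · intro k l hlk
    have h1 : t2 (ml l) ≤ nk k := by
      calc t2 (ml l) ≤ g2 (ml l) := hg2le _
        _ ≤ nk (l + 1) := hg2n l
        _ ≤ nk k := hnmono.monotone hlk
    exact le_of_lt (ht2 (ml l) (hmM l) (nk k) h1)
  · intro k l hkl
    have h1 : t1 (nk k) ≤ ml l := by
      calc t1 (nk k) ≤ g1 (nk k) := hg1le _
        _ ≤ ml k := hg1m k
        _ ≤ ml l := hmmono.monotone hkl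
    exact le_of_lt (ht1 (nk k) (hnN k) (ml l) h1)

/-- An unstable bounded function has the order property with some gap `(r, s)`
(possibly with the roles of the inequalities reversed). -/
theorem stmt_13 {M : Type*} (φ : M → M → ℝ) (B : ℝ) (hB : ∀ a b, |φ a b| ≤ B)
    (a b : ℕ → M) (L K : ℕ → ℝ) (ℓ₁ ℓ₂ : ℝ)
    (hL : ∀ n, Tendsto (fun m => φ (a n) (b m)) atTop (nhds (L n)))
    (hℓ₁ : Tendsto L atTop (nhds ℓ₁))
    (hK : ∀ m, Tendsto (fun n => φ (a n) (b m)) atTop (nhds (K m)))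
    (hℓ₂ : Tendsto K atTop (nhds ℓ₂))
    (hne : ℓ₁ ≠ ℓ₂) :
    ∃ (r s : ℝ), r < s ∧ ∃ (nk ml : ℕ → ℕ), StrictMono nk ∧ StrictMono ml ∧
      (((∀ k l, l < k → φ (a (nk k)) (b (ml l)) ≤ r) ∧
        (∀ k l, k ≤ l → s ≤ φ (a (nk k)) (b (ml l)))) ∨
       ((∀ k l, l < k → s ≤ φ (a (nk k)) (b (ml l))) ∧
        (∀ k l, k ≤ l → φ (a (nk k)) (b (ml l)) ≤ r))) := by
  rcases lt_or_gt_of_ne hne with h | h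
  · -- ℓ₁ < ℓ₂ : apply aux to -φ
    obtain ⟨r, s, hrs, nk, ml, hn, hm, h1, h2⟩ :=
      stmt_13_aux (fun x y => -(φ x y)) a b (fun n => -(L n)) (fun m => -(K m))
        (-ℓ₁) (-ℓ₂) (fun n => (hL n).neg) hℓ₁.neg (fun m => (hK m).neg) hℓ₂.neg
        (by linarith)
    refine ⟨-s, -r, by linarith, nk, ml, hn, hm, Or.inr ⟨?_, ?_⟩⟩
    · intro k l hlk; have := h1 k l hlk; linarith
    · intro k l hkl; have := h2 k l hkl; linarith
  · obtain ⟨r, s, hrs, nk, ml, hn, hm, h1, h2⟩ :=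
      stmt_13_aux φ a b L K ℓ₁ ℓ₂ hL hℓ₁ hK hℓ₂ h
    exact ⟨r, s, hrs, nk, ml, hn, hm, Or.inl ⟨h1, h2⟩⟩
end

section
/- Uniform approximation by convex combinations: let E be a real normed space, A ⊆ E, and x an element of the weak closure of A. Then for every ε > 0 there exist n ≥ 1, elements a_1,…,a_n ∈ A and nonnegative reals λ_1,…,λ_n summing to 1 such that ‖x − Σ λ_i a_i‖ < ε. -/
/-- Any point of the weak closure of `A` can be approximated in norm by finite
convex combinations of elements of `A` (restatement of Mazur's Lemma). -/
theorem stmt_17 {E : Type*} [NormedAddCommGroup E] [NormedSpace ℝ E]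
    (A : Set E) (x : E)
    (hx : x ∈ (@closure (WeakSpace ℝ E) _ (A : Set (WeakSpace ℝ E)) : Set E)) :
    ∀ ε > 0, ∃ (n : ℕ), 1 ≤ n ∧ ∃ (a : Fin n → E) (lam : Fin n → ℝ),
      (∀ i, a i ∈ A) ∧ (∀ i, 0 ≤ lam i) ∧ (∑ i, lam i) = 1 ∧
      ‖x - ∑ i, lam i • a i‖ < ε := by
  intro ε hε
  have hconv : Convex ℝ (convexHull ℝ A) := convex_convexHull ℝ A
  have key := hconv.toWeakSpace_closure ℝ
  have himg : ∀ s : Set E, toWeakSpace ℝ E '' s = s := by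
    intro s; ext y; constructor
    · rintro ⟨z, hz, rfl⟩; exact hz
    · intro h; exact ⟨y, h, rfl⟩
  rw [himg, himg] at key
  have hx' : x ∈ closure (convexHull ℝ A) := by
    rw [key]
    exact @closure_mono (WeakSpace ℝ E) _ _ _ (subset_convexHull ℝ A) x hx
  obtain ⟨y, hy, hyd⟩ := Metric.mem_closure_iff.mp hx' ε hε
  rw [_root_.convexHull_eq] at hy
  obtain ⟨ι, t, w, z, hw0, hw1, hz, rfl⟩ := hy
  classical
  have hne : t.Nonempty := by
    rcases t.eq_empty_or_nonempty with h | h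
    · exfalso; simp [h] at hw1
    · exact h
  let e := t.equivFin
  refine ⟨t.card, Finset.card_pos.mpr hne, fun i => z (e.symm i), fun i => w (e.symm i),
    fun i => hz _ (e.symm i).2, fun i => hw0 _ (e.symm i).2, ?_, ?_⟩
  · rw [Equiv.sum_comp e.symm (fun j : ↥t => w j), Finset.sum_coe_sort t w]
    exact hw1
  · have : (∑ i, w (e.symm i) • z (e.symm i)) = t.centerMass w z := by
      rw [Equiv.sum_comp e.symm (fun j : ↥t => w (j : ι) • z (j : ι)),
        Finset.centerMass, hw1, inv_one, one_smul, Finset.sum_coe_sort t (fun j => w j • z j)]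
    rw [this]
    rwa [dist_eq_norm] at hyd
end
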